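/- arXiv:2604.01555 — 2 statements merged into one kernel-verified Lean document; each statement's English description precedes it below -/
import Mathlib

section
/- Let H be a Hermitian matrix with smallest eigenvalue E_GS attained at unit eigenvector ψ. Then for every matrix A, the expectation ⟨ψ| A H A* - (1/2)(H A A* + A A* H) |ψ⟩ is real and nonnegative. -/
open Matrix ComplexOrder

theorem stmt_10 {n : ℕ} (H : Matrix (Fin n) (Fin n) ℂ) (hH : H.IsHermitian)
    (E : ℝ) (hmin : ∀ i : Fin n, E ≤ hH.eigenvalues i)
    (ψ : Fin n → ℂ) (hunit : dotProduct (star ψ) ψ = 1)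
    (heig : H *ᵥ ψ = (E : ℂ) • ψ)
    (A : Matrix (Fin n) (Fin n) ℂ) :
    (dotProduct (star ψ)
        ((A * H * Aᴴ - (1 / 2 : ℂ) • (H * (A * Aᴴ) + (A * Aᴴ) * H)) *ᵥ ψ)).im = 0 ∧
    0 ≤ (dotProduct (star ψ)
        ((A * H * Aᴴ - (1 / 2 : ℂ) • (H * (A * Aᴴ) + (A * Aᴴ) * H)) *ᵥ ψ)).re := by
  set M : Matrix (Fin n) (Fin n) ℂ := H - (E : ℂ) • 1 with hMdef
  have hU := hH.spectral_theorem
  have hMpsd : M.PosSemidef := by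
    have key : M = (hH.eigenvectorUnitary : Matrix (Fin n) (Fin n) ℂ)
        * Matrix.diagonal (fun i => ((hH.eigenvalues i - E : ℝ) : ℂ))
        * ((hH.eigenvectorUnitary : Matrix (Fin n) (Fin n) ℂ))ᴴ := by
      have hdiag : Matrix.diagonal (fun i => ((hH.eigenvalues i - E : ℝ) : ℂ))
          = Matrix.diagonal (Complex.ofReal ∘ hH.eigenvalues) - (E : ℂ) • 1 := by
        ext i j
        rcases eq_or_ne i j with h | h <;>
          simp [h, Matrix.diagonal_apply, Matrix.one_apply]
      have hunitary : (hH.eigenvectorUnitary : Matrix (Fin n) (Fin n) ℂ)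
          * ((hH.eigenvectorUnitary : Matrix (Fin n) (Fin n) ℂ))ᴴ = 1 := by
        rw [← Matrix.star_eq_conjTranspose]
        exact Matrix.mem_unitaryGroup_iff.mp hH.eigenvectorUnitary.2
      rw [hdiag, Matrix.mul_sub, Matrix.sub_mul, Matrix.mul_smul, Matrix.smul_mul, mul_one,
        hunitary, hMdef, ← Matrix.star_eq_conjTranspose]
      congr 1
    rw [key]
    exact (Matrix.PosSemidef.diagonal (by
      intro i
      simp only [Pi.zero_apply]
      exact_mod_cast sub_nonneg.mpr (hmin i))).mul_mul_conjTranspose_same _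
  set φ : Fin n → ℂ := Aᴴ *ᵥ ψ with hφ
  have hstarφ : star φ = star ψ ᵥ* A := by
    rw [hφ, star_mulVec, conjTranspose_conjTranspose]
  have hvm : star ψ ᵥ* H = (E : ℂ) • star ψ := by
    have : star (H *ᵥ ψ) = star ψ ᵥ* Hᴴ := star_mulVec H ψ
    rw [hH.eq] at this
    rw [← this, heig, star_smul]
    simp
  have key : dotProduct (star ψ)
      ((A * H * Aᴴ - (1 / 2 : ℂ) • (H * (A * Aᴴ) + (A * Aᴴ) * H)) *ᵥ ψ)
      = dotProduct (star φ) (M *ᵥ φ) := by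
    have h1 : dotProduct (star ψ) ((A * H * Aᴴ) *ᵥ ψ)
        = dotProduct (star φ) (H *ᵥ φ) := by
      rw [← Matrix.mulVec_mulVec, ← Matrix.mulVec_mulVec, Matrix.dotProduct_mulVec (star ψ) A,
        ← hstarφ, hφ]
    have h2 : dotProduct (star ψ) ((H * (A * Aᴴ)) *ᵥ ψ)
        = (E : ℂ) * dotProduct (star φ) φ := by
      rw [← Matrix.mulVec_mulVec, Matrix.dotProduct_mulVec (star ψ) H, hvm,
        ← Matrix.mulVec_mulVec, smul_dotProduct, Matrix.dotProduct_mulVec (star ψ) A,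
        ← hstarφ, hφ]
      simp
    have h3 : dotProduct (star ψ) (((A * Aᴴ) * H) *ᵥ ψ)
        = (E : ℂ) * dotProduct (star φ) φ := by
      rw [← Matrix.mulVec_mulVec, heig, Matrix.mulVec_smul, dotProduct_smul,
        ← Matrix.mulVec_mulVec, Matrix.dotProduct_mulVec (star ψ) A, ← hstarφ, hφ]
      simp
    rw [Matrix.sub_mulVec, dotProduct_sub, h1, Matrix.smul_mulVec,
      dotProduct_smul, Matrix.add_mulVec, dotProduct_add, h2, h3,
      hMdef, Matrix.sub_mulVec, dotProduct_sub, Matrix.smul_mulVec,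
      dotProduct_smul, Matrix.one_mulVec]
    simp only [smul_eq_mul]
    ring
  have hpos : (0 : ℂ) ≤ dotProduct (star φ) (M *ᵥ φ) := hMpsd.dotProduct_mulVec_nonneg φ
  rw [key]
  rw [Complex.le_def] at hpos
  simp at hpos
  exact ⟨hpos.2.symm, hpos.1⟩
end

section
/- Let M be a Hermitian matrix indexed by a finite set of monomials partitioned into two groups B₁ and B₂, such that the blocks satisfy: the B₁×B₁ block equals A + iB with A real symmetric and B real antisymmetric, the B₂×B₂ block equals E + iF with E real symmetric and F real antisymmetric, and the B₁×B₂ block equals C + iD with C, D real. Then M ⪰ 0 implies the real matrix [[A, D], [Dᵀ, E]] is positive semidefinite. -/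
open Matrix ComplexOrder

lemma re_posSemidef {ι : Type*} [Fintype ι] (Z : Matrix ι ι ℂ) (hZ : Z.PosSemidef) :
    (Matrix.of fun i j => (Z i j).re).PosSemidef := by
  rw [Matrix.posSemidef_iff_dotProduct_mulVec]
  constructor
  · ext i j
    have h : Z j i = star (Z i j) := by
      conv_lhs => rw [← hZ.1]
      simp [Matrix.conjTranspose_apply]
    simp [Matrix.conjTranspose_apply, Matrix.of_apply, h]
  · intro x
    have h := hZ.dotProduct_mulVec_nonneg (fun i => (x i : ℂ))
    rw [Complex.le_def] at h
    have h1 := h.1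
    simp only [Complex.zero_re] at h1
    have key : (dotProduct (star x) ((Matrix.of fun i j => (Z i j).re) *ᵥ x))
        = (dotProduct (star fun i => (x i : ℂ)) (Z *ᵥ fun i => (x i : ℂ))).re := by
      simp only [dotProduct, Matrix.mulVec, Pi.star_apply, star_trivial,
        RCLike.star_def, Complex.conj_ofReal, Complex.re_sum, Complex.re_ofReal_mul,
        Matrix.of_apply]
      refine Finset.sum_congr rfl fun i _ => ?_
      refine congrArg _ (Finset.sum_congr rfl fun j _ => ?_)
      simp [Complex.mul_re]
    rw [key]
    exact h1

theorem stmt_19 {n m : ℕ}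
    (A B : Matrix (Fin n) (Fin n) ℝ) (E F : Matrix (Fin m) (Fin m) ℝ)
    (C D : Matrix (Fin n) (Fin m) ℝ)
    (hA : Aᵀ = A) (hB : Bᵀ = -B) (hE : Eᵀ = E) (hF : Fᵀ = -F)
    (hM : (Matrix.fromBlocks
            (A.map (Complex.ofReal) + Complex.I • B.map (Complex.ofReal))
            (C.map (Complex.ofReal) + Complex.I • D.map (Complex.ofReal))
            ((C.map (Complex.ofReal) + Complex.I • D.map (Complex.ofReal))ᴴ)
            (E.map (Complex.ofReal) + Complex.I • F.map (Complex.ofReal))).PosSemidef) :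
    (Matrix.fromBlocks A D Dᵀ E).PosSemidef := by
  set P11 := A.map (Complex.ofReal) + Complex.I • B.map (Complex.ofReal) with hP11
  set P12 := C.map (Complex.ofReal) + Complex.I • D.map (Complex.ofReal) with hP12
  set P22 := E.map (Complex.ofReal) + Complex.I • F.map (Complex.ofReal) with hP22
  set U : Matrix (Fin n ⊕ Fin m) (Fin n ⊕ Fin m) ℂ :=
    Matrix.fromBlocks 1 0 0 ((-Complex.I) • 1) with hU
  have hM' := hM.conjTranspose_mul_mul_same U
  have hblocks : Uᴴ * (Matrix.fromBlocks P11 P12 P12ᴴ P22) * U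
      = Matrix.fromBlocks P11 ((-Complex.I) • P12) (Complex.I • P12ᴴ) P22 := by
    rw [hU]
    simp [Matrix.fromBlocks_conjTranspose, Matrix.fromBlocks_multiply,
      Matrix.smul_mul, Matrix.mul_smul, smul_smul, Complex.I_mul_I]
  have key : Matrix.fromBlocks A D Dᵀ E
      = Matrix.of fun i j => (((Uᴴ * (Matrix.fromBlocks P11 P12 P12ᴴ P22) * U)) i j).re := by
    rw [hblocks]
    ext i j
    cases i <;> cases j <;>
      simp [hP11, hP12, hP22, Matrix.conjTranspose_apply, Complex.mul_re,
        Complex.add_re, Complex.add_im, mul_comm]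
  rw [key]
  exact re_posSemidef _ hM'
end
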